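/- arXiv:0711.1272 — 2 statements merged into one kernel-verified Lean document; each statement's English description precedes it below -/
import Mathlib

section
/- Fix σ > 0, T > 0 and S₀ = K > 0. Let C₀^B = S₀σ·√(T/(2π)) be the at-the-money Bachelier call price with absolute volatility σ^B = S₀σ, and C₀^{BS} = S₀·(Φ(σ√T/2) − Φ(−σ√T/2)) the at-the-money Black–Merton–Scholes call price with volatility σ^{BS} = σ. Then 0 ≤ C₀^B − C₀^{BS} ≤ (S₀/(12√(2π)))·σ³·T^{3/2}. -/
open MeasureTheory

/-- The standard normal cumulative distribution function Φ. -/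
noncomputable def stdNormalCdf (x : ℝ) : ℝ :=
  ∫ y in Set.Iic x, (Real.sqrt (2 * Real.pi))⁻¹ * Real.exp (-y ^ 2 / 2)

lemma stdNormal_integrable :
    MeasureTheory.Integrable
      (fun y : ℝ => (Real.sqrt (2 * Real.pi))⁻¹ * Real.exp (-y ^ 2 / 2)) := by
  have : (fun y : ℝ => (Real.sqrt (2 * Real.pi))⁻¹ * Real.exp (-y ^ 2 / 2))
      = fun y : ℝ => (Real.sqrt (2 * Real.pi))⁻¹ * Real.exp (-(1/2 : ℝ) * y ^ 2) := by
    funext y; ring_nf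
  rw [this]
  exact (integrable_exp_neg_mul_sq (by norm_num)).const_mul _

lemma cdf_diff (a : ℝ) :
    stdNormalCdf a - stdNormalCdf (-a)
      = ∫ y in (-a)..a, (Real.sqrt (2 * Real.pi))⁻¹ * Real.exp (-y ^ 2 / 2) := by
  exact intervalIntegral.integral_Iic_sub_Iic stdNormal_integrable.integrableOn
    stdNormal_integrable.integrableOn

/-- Comparison of at-the-money Bachelier and Black–Merton–Scholes prices:
with `C₀^B = S₀σ√(T/(2π))` and `C₀^{BS} = S₀(Φ(σ√T/2) − Φ(−σ√T/2))` one has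
`0 ≤ C₀^B − C₀^{BS} ≤ (S₀/(12√(2π)))·σ³·T^{3/2}`. -/
theorem bachelier_vs_black_scholes_atm (σ T S₀ : ℝ) (hσ : 0 < σ) (hT : 0 < T)
    (hS₀ : 0 < S₀) :
    0 ≤ S₀ * σ * Real.sqrt (T / (2 * Real.pi))
        - S₀ * (stdNormalCdf (σ * Real.sqrt T / 2) - stdNormalCdf (-(σ * Real.sqrt T / 2)))
      ∧ S₀ * σ * Real.sqrt (T / (2 * Real.pi))
          - S₀ * (stdNormalCdf (σ * Real.sqrt T / 2) - stdNormalCdf (-(σ * Real.sqrt T / 2)))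
        ≤ S₀ / (12 * Real.sqrt (2 * Real.pi)) * σ ^ 3 * T ^ ((3 : ℝ) / 2) := by
  set a : ℝ := σ * Real.sqrt T / 2 with ha_def
  have hsT : 0 < Real.sqrt T := Real.sqrt_pos.mpr hT
  have ha : 0 < a := by positivity
  have h2π : 0 < Real.sqrt (2 * Real.pi) := Real.sqrt_pos.mpr (by positivity)
  set c : ℝ := (Real.sqrt (2 * Real.pi))⁻¹ with hc_def
  have hc : 0 < c := by positivity
  -- rewrite the Bachelier price
  have hB : S₀ * σ * Real.sqrt (T / (2 * Real.pi)) = S₀ * (c * (2 * a)) := by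
    rw [show T / (2 * Real.pi) = T * (2 * Real.pi)⁻¹ by ring,
      Real.sqrt_mul hT.le, Real.sqrt_inv]
    rw [ha_def, hc_def]; ring
  rw [hB, cdf_diff]
  have hint : IntervalIntegrable
      (fun y : ℝ => c * Real.exp (-y ^ 2 / 2)) volume (-a) a :=
    stdNormal_integrable.intervalIntegrable
  have hint2 : IntervalIntegrable (fun _ : ℝ => c) volume (-a) a :=
    intervalIntegrable_const
  have hconst : (∫ _ in (-a)..a, c) = c * (2 * a) := by
    rw [intervalIntegral.integral_const]; simp; ring
  have key : S₀ * (c * (2 * a)) - S₀ * (∫ y in (-a)..a, c * Real.exp (-y ^ 2 / 2))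
      = S₀ * ∫ y in (-a)..a, c * (1 - Real.exp (-y ^ 2 / 2)) := by
    rw [show (fun y : ℝ => c * (1 - Real.exp (-y ^ 2 / 2)))
        = fun y : ℝ => c - c * Real.exp (-y ^ 2 / 2) by funext y; ring]
    rw [intervalIntegral.integral_sub hint2 hint, hconst]; ring
  have hle : -a ≤ a := by linarith
  constructor
  · rw [key]
    apply mul_nonneg hS₀.le
    apply intervalIntegral.integral_nonneg hle
    intro y _
    have : Real.exp (-y ^ 2 / 2) ≤ 1 := by
      rw [show (1:ℝ) = Real.exp 0 by simp]
      exact Real.exp_le_exp.mpr (by nlinarith [sq_nonneg y])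
    nlinarith
  · rw [key]
    have hmono : (∫ y in (-a)..a, c * (1 - Real.exp (-y ^ 2 / 2)))
        ≤ ∫ y in (-a)..a, c * (y ^ 2 / 2) := by
      have heq : (fun y : ℝ => c * (1 - Real.exp (-y ^ 2 / 2)))
          = fun y : ℝ => c - c * Real.exp (-y ^ 2 / 2) := by funext y; ring
      apply intervalIntegral.integral_mono_on hle (heq ▸ hint2.sub hint)
        ((continuous_const.mul ((continuous_pow 2).div_const 2)).intervalIntegrable _ _)
      intro y _
      have h1 : 1 - (y ^ 2 / 2) ≤ Real.exp (-(y ^ 2 / 2)) := by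
        have := Real.add_one_le_exp (-(y ^ 2 / 2))
        linarith
      have h2 : 1 - Real.exp (-y ^ 2 / 2) ≤ y ^ 2 / 2 := by
        rw [show -y ^ 2 / 2 = -(y ^ 2 / 2) by ring]; linarith
      show c * (1 - Real.exp (-y ^ 2 / 2)) ≤ c * (y ^ 2 / 2)
      nlinarith
    have hval : (∫ y in (-a)..a, c * (y ^ 2 / 2)) = c * a ^ 3 / 3 := by
      rw [show (fun y : ℝ => c * (y ^ 2 / 2)) = fun y : ℝ => (c / 2) * y ^ 2 by
        funext y; ring]
      rw [intervalIntegral.integral_const_mul, integral_pow]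
      ring
    have hT32 : T ^ ((3 : ℝ) / 2) = Real.sqrt T ^ 3 := by
      rw [Real.sqrt_eq_rpow, ← Real.rpow_natCast (T ^ ((1:ℝ)/2)) 3,
        ← Real.rpow_mul hT.le]
      norm_num
    have ha3 : a ^ 3 = σ ^ 3 * Real.sqrt T ^ 3 / 8 := by rw [ha_def]; ring
    have hfin : S₀ * (c * a ^ 3 / 3)
        ≤ S₀ / (12 * Real.sqrt (2 * Real.pi)) * σ ^ 3 * T ^ ((3 : ℝ) / 2) := by
      rw [hT32, ha3, hc_def]
      have h1 : S₀ * ((Real.sqrt (2 * Real.pi))⁻¹ * (σ ^ 3 * Real.sqrt T ^ 3 / 8) / 3)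
          = (S₀ * σ ^ 3 * Real.sqrt T ^ 3) / (24 * Real.sqrt (2 * Real.pi)) := by
        field_simp; ring
      have h2 : S₀ / (12 * Real.sqrt (2 * Real.pi)) * σ ^ 3 * Real.sqrt T ^ 3
          = (S₀ * σ ^ 3 * Real.sqrt T ^ 3) / (12 * Real.sqrt (2 * Real.pi)) := by ring
      rw [h1, h2]
      apply div_le_div_of_nonneg_left (by positivity) (by positivity) (by linarith)
    calc S₀ * ∫ y in (-a)..a, c * (1 - Real.exp (-y ^ 2 / 2))
        ≤ S₀ * (c * a ^ 3 / 3) := by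
          rw [← hval]; exact mul_le_mul_of_nonneg_left hmono hS₀.le
      _ ≤ _ := hfin
end

section
/- Fix σ > 0, T > 0 and S₀ = K > 0. Let C₀^B = S₀σ·√(T/(2π)) and C₀^{BS} = S₀·(Φ(σ√T/2) − Φ(−σ√T/2)) be the at-the-money Bachelier and Black–Merton–Scholes call prices with σ^B = S₀σ and σ^{BS} = σ. Then the relative error satisfies (C₀^B − C₀^{BS})/C₀^B ≤ T·σ²/12. -/
open MeasureTheory

lemma gauss_integrable :
    Integrable (fun y : ℝ => (Real.sqrt (2 * Real.pi))⁻¹ * Real.exp (-y ^ 2 / 2)) := by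
  apply Integrable.const_mul
  have h : (fun y : ℝ => Real.exp (-y ^ 2 / 2))
      = fun y : ℝ => Real.exp (-(2⁻¹) * y ^ 2) := by
    ext y; ring_nf
  rw [h]
  exact integrable_exp_neg_mul_sq (by norm_num)

/-- Relative error of the at-the-money Black–Merton–Scholes price with respect to the
Bachelier price: `(C₀^B − C₀^{BS})/C₀^B ≤ Tσ²/12`. -/
theorem bachelier_vs_black_scholes_atm_relative_error (σ T S₀ : ℝ)
    (hσ : 0 < σ) (hT : 0 < T) (hS₀ : 0 < S₀) :
    (S₀ * σ * Real.sqrt (T / (2 * Real.pi))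
        - S₀ * (stdNormalCdf (σ * Real.sqrt T / 2) - stdNormalCdf (-(σ * Real.sqrt T / 2))))
      / (S₀ * σ * Real.sqrt (T / (2 * Real.pi)))
      ≤ T * σ ^ 2 / 12 := by
  have hs0 : 0 < Real.sqrt (2 * Real.pi) := Real.sqrt_pos.mpr (by positivity)
  set s := Real.sqrt (2 * Real.pi) with hs
  set t := Real.sqrt T with ht
  have ht0 : 0 < t := Real.sqrt_pos.mpr hT
  have ht2 : t ^ 2 = T := Real.sq_sqrt hT.le
  set a := σ * t / 2 with ha
  have ha0 : 0 < a := by positivity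
  have hsq : Real.sqrt (T / (2 * Real.pi)) = t / s := by
    rw [Real.sqrt_div hT.le]
  have hcont : Continuous fun y : ℝ => Real.exp (-y ^ 2 / 2) := by continuity
  have hmono : 2 * a - a ^ 3 / 3 ≤ ∫ y in (-a)..a, Real.exp (-y ^ 2 / 2) := by
    have hle : ∀ y ∈ Set.Icc (-a) a, (1 - y ^ 2 / 2) ≤ Real.exp (-y ^ 2 / 2) := by
      intro y _
      have := Real.add_one_le_exp (-y ^ 2 / 2)
      linarith
    have h1 : IntervalIntegrable (fun y : ℝ => 1 - y ^ 2 / 2) volume (-a) a :=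
      (by continuity : Continuous fun y : ℝ => 1 - y ^ 2 / 2).intervalIntegrable _ _
    have h2 : IntervalIntegrable (fun y : ℝ => Real.exp (-y ^ 2 / 2)) volume (-a) a :=
      hcont.intervalIntegrable _ _
    have hmm := intervalIntegral.integral_mono_on (by linarith : (-a) ≤ a) h1 h2 hle
    have hcalc : (∫ y in (-a)..a, (1 - y ^ 2 / 2)) = 2 * a - a ^ 3 / 3 := by
      have he : (fun y : ℝ => 1 - y ^ 2 / 2) = fun y : ℝ => 1 - (1/2) * y ^ 2 := by
        ext y; ring
      have hi2 : IntervalIntegrable (fun y : ℝ => (1/2 : ℝ) * y ^ 2) volume (-a) a :=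
        (continuous_const.mul (continuous_pow 2)).intervalIntegrable _ _
      rw [he, intervalIntegral.integral_sub intervalIntegrable_const hi2,
        intervalIntegral.integral_const_mul, integral_pow]
      simp
      ring
    rw [hcalc] at hmm
    exact hmm
  have hdiff : stdNormalCdf a - stdNormalCdf (-a)
      = s⁻¹ * ∫ y in (-a)..a, Real.exp (-y ^ 2 / 2) := by
    rw [cdf_diff, intervalIntegral.integral_const_mul]
  rw [hsq, hdiff, div_le_iff₀ (by positivity)]
  set I := ∫ y in (-a)..a, Real.exp (-y ^ 2 / 2) with hI
  have hu : 0 < s⁻¹ := by positivity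
  have key : σ * t - I ≤ a ^ 3 / 3 := by rw [ha] at hmono ⊢; nlinarith
  have h2 : S₀ * (σ * t - I) ≤ S₀ * (a ^ 3 / 3) :=
    mul_le_mul_of_nonneg_left key hS₀.le
  rw [ha] at h2
  have hTt : T = t ^ 2 := ht2.symm
  rw [hTt]
  have : S₀ * σ * (t / s) - S₀ * (s⁻¹ * I) = s⁻¹ * (S₀ * (σ * t - I)) := by
    field_simp
  rw [this]
  have hrhs : t ^ 2 * σ ^ 2 / 12 * (S₀ * σ * (t / s)) = s⁻¹ * (S₀ * (σ ^ 3 * t ^ 3 / 12)) := by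
    field_simp
  rw [hrhs]
  apply mul_le_mul_of_nonneg_left _ hu.le
  nlinarith [h2, mul_pos (mul_pos hS₀ (pow_pos hσ 3)) (pow_pos ht0 3)]
end
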